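/- Let n ≥ 1 and for i = 1, …, n let A_i : ℝ → Mat₂(ℝ) be differentiable matrix curves such that for every t ∈ ℝ, det A_i(t) > 0, and for every t ∈ ℝ and every v ∈ ℝ², (A_i(t)v) ∧ (A_i'(t)v) ≥ 0. Then the product curve M(t) := A_n(t) ⋯ A_2(t) A_1(t) satisfies (M(t)v) ∧ (M'(t)v) ≥ 0 for every t ∈ ℝ and every v ∈ ℝ². (Products of positively winding curves are positively winding.) -/

import Mathlib

open Matrix Filter Topology

noncomputable section

/-- The wedge product `u ∧ w := u₁w₂ − u₂w₁` of two vectors in `ℝ²`. -/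
def wedge (u w : Fin 2 → ℝ) : ℝ := u 0 * w 1 - u 1 * w 0

lemma wedge_map (B : Matrix (Fin 2) (Fin 2) ℝ) (u w : Fin 2 → ℝ) :
    wedge (B.mulVec u) (B.mulVec w) = B.det * wedge u w := by
  simp [wedge, Matrix.mulVec, dotProduct, Fin.sum_univ_two, Matrix.det_fin_two]
  ring

lemma wedge_add_right (u w w' : Fin 2 → ℝ) :
    wedge u (w + w') = wedge u w + wedge u w' := by
  simp [wedge]; ring

lemma hasDerivAt_mul_mat {M N : ℝ → Matrix (Fin 2) (Fin 2) ℝ}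
    {M' N' : Matrix (Fin 2) (Fin 2) ℝ} {t : ℝ}
    (hM : ∀ j k, HasDerivAt (fun s => M s j k) (M' j k) t)
    (hN : ∀ j k, HasDerivAt (fun s => N s j k) (N' j k) t)
    (j k : Fin 2) :
    HasDerivAt (fun s => (M s * N s) j k) ((M' * N t + M t * N') j k) t := by
  have : HasDerivAt (fun s => ∑ l, M s j l * N s l k)
      (∑ l, (M' j l * N t l k + M t j l * N' l k)) t :=
    HasDerivAt.fun_sum (fun l _ => (hM j l).mul (hN l k))
  simpa [Matrix.mul_apply, Matrix.add_apply, Finset.sum_add_distrib] using this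

lemma prod_ofFn_succ {α : Type*} [Monoid α] {n : ℕ} (f : Fin (n + 1) → α) :
    (List.ofFn f).reverse.prod
      = f (Fin.last n) * (List.ofFn (fun i : Fin n => f i.castSucc)).reverse.prod := by
  rw [List.ofFn_succ']
  simp [Function.comp]

lemma aux (n : ℕ) (A A' : Fin n → ℝ → Matrix (Fin 2) (Fin 2) ℝ)
    (hderiv : ∀ i t, ∀ j k, HasDerivAt (fun s => A i s j k) (A' i t j k) t)
    (hdet : ∀ i t, 0 < (A i t).det)
    (hwind : ∀ i t (v : Fin 2 → ℝ), 0 ≤ wedge ((A i t).mulVec v) ((A' i t).mulVec v)) :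
    ∀ (t : ℝ), ∃ M' : Matrix (Fin 2) (Fin 2) ℝ,
      (∀ j k, HasDerivAt (fun s => ((List.ofFn fun i => A i s).reverse.prod) j k) (M' j k) t) ∧
      ∀ v : Fin 2 → ℝ,
        0 ≤ wedge (((List.ofFn fun i => A i t).reverse.prod).mulVec v) (M'.mulVec v) := by
  induction n with
  | zero =>
    intro t
    refine ⟨0, fun j k => ?_, fun v => ?_⟩
    · simpa using hasDerivAt_const t ((1 : Matrix (Fin 2) (Fin 2) ℝ) j k)
    · simp [wedge]
  | succ n ih =>
    intro t
    obtain ⟨Q', hQd, hQw⟩ := ih (fun i => A i.castSucc) (fun i => A' i.castSucc)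
      (fun i => hderiv i.castSucc) (fun i => hdet i.castSucc) (fun i => hwind i.castSucc) t
    set Q : ℝ → Matrix (Fin 2) (Fin 2) ℝ :=
      fun s => (List.ofFn (fun i : Fin n => A i.castSucc s)).reverse.prod with hQ
    set B : ℝ → Matrix (Fin 2) (Fin 2) ℝ := A (Fin.last n)
    refine ⟨A' (Fin.last n) t * Q t + B t * Q', fun j k => ?_, fun v => ?_⟩
    · have key : ∀ s, ((List.ofFn fun i => A i s).reverse.prod) = B s * Q s := by
        intro s; exact prod_ofFn_succ (fun i => A i s)
      have heq : (fun s => ((List.ofFn fun i => A i s).reverse.prod) j k)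
          = fun s => (B s * Q s) j k := funext fun s => by rw [key s]
      rw [heq, Matrix.add_apply]
      have := hasDerivAt_mul_mat (hderiv (Fin.last n) t) hQd j k
      simpa [Matrix.add_apply] using this
    · have key : ((List.ofFn fun i => A i t).reverse.prod) = B t * Q t :=
        prod_ofFn_succ (fun i => A i t)
      rw [key, Matrix.add_mulVec, wedge_add_right]
      have h1 : 0 ≤ wedge ((B t * Q t).mulVec v) ((A' (Fin.last n) t * Q t).mulVec v) := by
        rw [← Matrix.mulVec_mulVec, ← Matrix.mulVec_mulVec]
        exact hwind (Fin.last n) t ((Q t).mulVec v)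
      have h2 : 0 ≤ wedge ((B t * Q t).mulVec v) ((B t * Q').mulVec v) := by
        rw [← Matrix.mulVec_mulVec, ← Matrix.mulVec_mulVec, wedge_map]
        exact mul_nonneg (hdet (Fin.last n) t).le (hQw v)
      linarith

theorem stmt_1 (n : ℕ) (hn : 1 ≤ n) (A A' : Fin n → ℝ → Matrix (Fin 2) (Fin 2) ℝ)
    (hderiv : ∀ i t, ∀ j k, HasDerivAt (fun s => A i s j k) (A' i t j k) t)
    (hdet : ∀ i t, 0 < (A i t).det)
    (hwind : ∀ i t (v : Fin 2 → ℝ), 0 ≤ wedge ((A i t).mulVec v) ((A' i t).mulVec v)) :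
    ∀ (t : ℝ) (M' : Matrix (Fin 2) (Fin 2) ℝ),
      (∀ j k, HasDerivAt (fun s => ((List.ofFn fun i => A i s).reverse.prod) j k) (M' j k) t) →
      ∀ v : Fin 2 → ℝ,
        0 ≤ wedge (((List.ofFn fun i => A i t).reverse.prod).mulVec v) (M'.mulVec v) := by
  intro t M' hM' v
  obtain ⟨N', hNd, hNw⟩ := aux n A A' hderiv hdet hwind t
  have : M' = N' := by
    ext j k; exact (hM' j k).unique (hNd j k)
  rw [this]
  exact hNw v
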